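/- Fix a ladder system ⟨x_ξ : ξ ∈ lim(ω₁)⟩ on the set of all countable limit ordinals. If S is a nonstationary set of countable limit ordinals, then for every r ∈ 2^ℕ the linear order (S, <_r) is σ-scattered. -/

import Mathlib

/-- The first uncountable ordinal, `ω₁`. -/
noncomputable def ω1 : Ordinal := (Cardinal.aleph 1).ord

/-- `x` is a ladder system on the set of all countable limit ordinals: for each countable
limit ordinal `ξ`, `x ξ : ℕ → Ordinal` is strictly increasing with range contained and
cofinal in `ξ`. -/
def IsLadderSystem (x : Ordinal → ℕ → Ordinal) : Prop :=
  ∀ ξ : Ordinal, ξ < ω1 → Order.IsSuccLimit ξ →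
    StrictMono (x ξ) ∧ (∀ n : ℕ, x ξ n < ξ) ∧ ∀ β < ξ, ∃ n : ℕ, β < x ξ n

/-- The linear order `<_r` determined by `r ∈ 2^ℕ`: `ξ <_r η` iff at the least `n` where
`x ξ` and `x η` differ, `x ξ n < x η n` is equivalent to `r n = 0` (here `0` is `false`). -/
def RLt (x : Ordinal → ℕ → Ordinal) (r : ℕ → Bool) (ξ η : Ordinal) : Prop :=
  ∃ n : ℕ, (∀ m < n, x ξ m = x η m) ∧ x ξ n ≠ x η n ∧ (x ξ n < x η n ↔ r n = false)

/-- `C` is a club subset of `ω₁`: a set of countable ordinals which is unbounded in `ω₁`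
and contains the supremum of each of its nonempty bounded subsets. -/
def IsClubIn (C : Set Ordinal) : Prop :=
  C ⊆ Set.Iio ω1 ∧ (∀ β < ω1, ∃ γ ∈ C, β < γ) ∧
    ∀ D ⊆ C, D.Nonempty → (∃ β < ω1, ∀ γ ∈ D, γ ≤ β) → sSup D ∈ C

/-- `S` is a stationary subset of `ω₁`: it meets every club subset of `ω₁`. -/
def IsStat (S : Set Ordinal) : Prop := ∀ C : Set Ordinal, IsClubIn C → (S ∩ C).Nonempty

/-- A set `A` is scattered with respect to the relation `r` if there is no map of `ℚ`
into `A` which is strictly increasing from `<` to `r`. -/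
def RelScatteredOn (r : Ordinal → Ordinal → Prop) (A : Set Ordinal) : Prop :=
  ¬ ∃ f : ℚ → Ordinal, (∀ q : ℚ, f q ∈ A) ∧ ∀ p q : ℚ, p < q → r (f p) (f q)

/-- `(S, r)` is σ-scattered: `S` is a countable union of subsets, each scattered
with respect to `r`. -/
def RelSigmaScatteredOn (r : Ordinal → Ordinal → Prop) (S : Set Ordinal) : Prop :=
  ∃ A : ℕ → Set Ordinal, (⋃ n, A n) = S ∧ ∀ n : ℕ, RelScatteredOn r (A n)

/-- There is no strictly descending ω-sequence of ordinals. -/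
private lemma no_desc (F : ℕ → Ordinal) : ¬ ∀ i, F (i + 1) < F i := by
  intro h
  obtain ⟨m, hm, hmin⟩ := Ordinal.lt_wf.has_min (Set.range F) ⟨F 0, Set.mem_range_self 0⟩
  obtain ⟨i, rfl⟩ := hm
  exact hmin (F (i + 1)) (Set.mem_range_self _) (h i)

/-- A strictly decreasing-within-`(a,b)` sequence of rationals. -/
private lemma ratseq (a b : ℚ) (hab : a < b) :
    ∃ d : ℕ → ℚ, (∀ i, a < d i) ∧ (∀ i, d i < b) ∧ ∀ i, d (i + 1) < d i := by
  refine ⟨fun i => a + (b - a) / ((i : ℚ) + 2), fun i => ?_, fun i => ?_, fun i => ?_⟩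
  · have h1 : (0 : ℚ) < (i : ℚ) + 2 := by positivity
    have := div_pos (sub_pos.mpr hab) h1
    linarith
  · have h0 : (0 : ℚ) ≤ (i : ℚ) := Nat.cast_nonneg i
    have h2 : (1 : ℚ) < (i : ℚ) + 2 := by linarith
    have := div_lt_self (sub_pos.mpr hab) h2
    linarith
  · have h0 : (0 : ℚ) ≤ (i : ℚ) := Nat.cast_nonneg i
    have h1 : (0 : ℚ) < (i : ℚ) + 2 := by linarith
    show a + (b - a) / (((i + 1 : ℕ) : ℚ) + 2) < a + (b - a) / ((i : ℚ) + 2)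
    have hcast : ((i + 1 : ℕ) : ℚ) + 2 = (i : ℚ) + 3 := by push_cast; ring
    rw [hcast]
    have hbb : (b - a) / ((i : ℚ) + 3) < (b - a) / ((i : ℚ) + 2) :=
      div_lt_div_of_pos_left (sub_pos.mpr hab) h1 (by linarith)
    linarith

/-- On some open subinterval, the 0-th coordinate is constant. -/
private lemma const_interval (y : ℚ → ℕ → Ordinal) (s : ℕ → Bool) (a b : ℚ) (hab : a < b)
    (H : ∀ p q : ℚ, a < p → p < q → q < b →
      ∃ m : ℕ, (∀ k < m, y p k = y q k) ∧ y p m ≠ y q m ∧ (y p m < y q m ↔ s m = false)) :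
    ∃ a' b' : ℚ, a < a' ∧ a' < b' ∧ b' < b ∧
      ∀ p q : ℚ, a' < p → p < q → q < b' → y p 0 = y q 0 := by
  obtain ⟨d, hda, hdb, hdd⟩ := ratseq a b hab
  cases hs : s 0 with
  | false =>
    have mono : ∀ p q : ℚ, a < p → p < q → q < b → y p 0 ≤ y q 0 := by
      intro p q hp hpq hq
      obtain ⟨m, agree, hne, htw⟩ := H p q hp hpq hq
      cases m with
      | zero => exact (htw.mpr hs).le
      | succ m => exact (agree 0 (Nat.succ_pos m)).le
    have hF : ∀ i, y (d (i + 1)) 0 ≤ y (d i) 0 := fun i =>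
      mono _ _ (hda _) (hdd i) (hdb i)
    have hex : ∃ i, y (d (i + 1)) 0 = y (d i) 0 := by
      by_contra h
      push_neg at h
      exact no_desc (fun i => y (d i) 0) (fun i => (hF i).lt_of_ne (h i))
    obtain ⟨i, hi⟩ := hex
    refine ⟨d (i + 1), d i, hda _, hdd i, hdb i, ?_⟩
    intro p q hp hpq hq
    have h1 : y p 0 ≤ y q 0 :=
      mono p q ((hda _).trans hp) hpq (hq.trans (hdb i))
    have h2 : y q 0 ≤ y (d i) 0 :=
      mono q (d i) ((hda _).trans (hp.trans hpq)) hq (hdb i)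
    have h3 : y (d (i + 1)) 0 ≤ y p 0 :=
      mono (d (i + 1)) p (hda _) hp ((hpq.trans hq).trans (hdb i))
    have h4 : y (d i) 0 ≤ y p 0 := by rw [← hi]; exact h3
    exact le_antisymm h1 (h2.trans h4)
  | true =>
    have anti : ∀ p q : ℚ, a < p → p < q → q < b → y q 0 ≤ y p 0 := by
      intro p q hp hpq hq
      obtain ⟨m, agree, hne, htw⟩ := H p q hp hpq hq
      cases m with
      | zero =>
        have hnlt : ¬ y p 0 < y q 0 := by
          intro hlt
          have := htw.mp hlt
          simp [hs] at this
        exact not_lt.mp hnlt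
      | succ m => exact (agree 0 (Nat.succ_pos m)).ge
    -- increasing sequence u i := a + b - d i
    set u : ℕ → ℚ := fun i => a + b - d i with hu
    have hua : ∀ i, a < u i := fun i => by simp only [hu]; have := hdb i; linarith
    have hub : ∀ i, u i < b := fun i => by simp only [hu]; have := hda i; linarith
    have huinc : ∀ i, u i < u (i + 1) := fun i => by simp only [hu]; have := hdd i; linarith
    have hF : ∀ i, y (u (i + 1)) 0 ≤ y (u i) 0 := fun i =>
      anti (u i) (u (i + 1)) (hua i) (huinc i) (hub (i + 1))
    have hex : ∃ i, y (u (i + 1)) 0 = y (u i) 0 := by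
      by_contra h
      push_neg at h
      exact no_desc (fun i => y (u i) 0) (fun i => (hF i).lt_of_ne (h i))
    obtain ⟨i, hi⟩ := hex
    refine ⟨u i, u (i + 1), hua i, huinc i, hub (i + 1), ?_⟩
    intro p q hp hpq hq
    have h1 : y q 0 ≤ y p 0 :=
      anti p q ((hua i).trans hp) hpq (hq.trans (hub (i + 1)))
    have h2 : y p 0 ≤ y (u i) 0 :=
      anti (u i) p (hua i) hp ((hpq.trans hq).trans (hub (i + 1)))
    have h3 : y (u (i + 1)) 0 ≤ y q 0 :=
      anti q (u (i + 1)) ((hua i).trans (hp.trans hpq)) hq (hub (i + 1))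
    have h4 : y (u i) 0 ≤ y q 0 := by rw [← hi]; exact h3
    exact le_antisymm (h2.trans h4) h1

/-- Key lemma: no copy of an open rational interval in a twisted lexicographic order on
sequences of ordinals when all first differences occur by level `n`. -/
private lemma key (n : ℕ) (y : ℚ → ℕ → Ordinal) (s : ℕ → Bool) (a b : ℚ) (hab : a < b)
    (H : ∀ p q : ℚ, a < p → p < q → q < b →
      ∃ m : ℕ, m ≤ n ∧ (∀ k < m, y p k = y q k) ∧ y p m ≠ y q m ∧ (y p m < y q m ↔ s m = false)) :
    False := by
  induction n generalizing y s a b with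
  | zero =>
    obtain ⟨a', b', h1, h2, h3, hconst⟩ := const_interval y s a b hab
      (fun p q hp hpq hq => (H p q hp hpq hq).imp fun m hm => hm.2)
    obtain ⟨p, hp1, hp2⟩ := exists_between h2
    obtain ⟨q, hq1, hq2⟩ := exists_between hp2
    obtain ⟨m, hm, agree, hne, htw⟩ := H p q (h1.trans hp1) hq1 (hq2.trans h3)
    have hm0 : m = 0 := Nat.le_zero.mp hm
    subst hm0
    exact hne (hconst p q hp1 hq1 hq2)
  | succ n ih =>
    obtain ⟨a', b', h1, h2, h3, hconst⟩ := const_interval y s a b hab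
      (fun p q hp hpq hq => (H p q hp hpq hq).imp fun m hm => hm.2)
    refine ih (fun q k => y q (k + 1)) (fun k => s (k + 1)) a' b' h2 ?_
    intro p q hp hpq hq
    obtain ⟨m, hm, agree, hne, htw⟩ := H p q (h1.trans hp) hpq (hq.trans h3)
    cases m with
    | zero => exact absurd (hconst p q hp hpq hq) hne
    | succ m =>
      exact ⟨m, by omega, fun k hk => agree (k + 1) (by omega), hne, htw⟩

/-- If `S` is a nonstationary set of countable limit ordinals, then `(S, <_r)` is
σ-scattered for every `r` in Cantor space. -/
theorem nonstationary_sigma_scattered (x : Ordinal → ℕ → Ordinal)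
    (hx : IsLadderSystem x) (S : Set Ordinal)
    (hSsub : ∀ α ∈ S, α < ω1 ∧ Order.IsSuccLimit α) (hS : ¬ IsStat S) (r : ℕ → Bool) :
    RelSigmaScatteredOn (RLt x r) S := by
  classical
  -- a club disjoint from S
  obtain ⟨C, hC, hdis⟩ : ∃ C, IsClubIn C ∧ S ∩ C = ∅ := by
    by_contra hall
    apply hS
    intro C hCc
    by_contra hne
    exact hall ⟨C, hCc, Set.not_nonempty_iff_eq_empty.mp hne⟩
  set γf : Ordinal → Ordinal := fun ξ => sSup (C ∩ Set.Iio ξ) with hγf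
  have hbdd : ∀ ξ : Ordinal, BddAbove (C ∩ Set.Iio ξ) := fun ξ => ⟨ξ, fun c hc => hc.2.le⟩
  have hnotC : ∀ ξ ∈ S, ξ ∉ C := by
    intro ξ hξ hξC
    exact absurd (Set.mem_inter hξ hξC) (by rw [hdis]; exact id)
  -- γf ξ < ξ for ξ ∈ S
  have hγlt : ∀ ξ ∈ S, γf ξ < ξ := by
    intro ξ hξ
    obtain ⟨hξω, hξlim⟩ := hSsub ξ hξ
    have hle : γf ξ ≤ ξ := csSup_le' fun c hc => hc.2.le
    rcases lt_or_eq_of_le hle with h | h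
    · exact h
    · exfalso
      have hne : (C ∩ Set.Iio ξ).Nonempty := by
        by_contra hemp
        rw [Set.not_nonempty_iff_eq_empty] at hemp
        have : γf ξ = ⊥ := by rw [hγf]; simp [hemp]
        rw [h] at this
        exact (hξlim.pos).ne' (by simpa using this)
      have hmem : sSup (C ∩ Set.Iio ξ) ∈ C :=
        hC.2.2 _ Set.inter_subset_left hne ⟨ξ, hξω, fun c hc => hc.2.le⟩
      rw [show sSup (C ∩ Set.Iio ξ) = γf ξ from rfl, h] at hmem
      exact hnotC ξ hξ hmem
  have hle_γ : ∀ ξ : Ordinal, ∀ c ∈ C, c < ξ → c ≤ γf ξ := by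
    intro ξ c hc hcξ
    exact le_csSup (hbdd ξ) ⟨hc, hcξ⟩
  -- dichotomy
  have hdich : ∀ ξ ∈ S, ∀ η ∈ S, ξ < η → γf ξ ≠ γf η → ξ ≤ γf η := by
    intro ξ hξ η hη hξη hne
    by_contra h'
    push_neg at h'
    apply hne
    have hset : C ∩ Set.Iio ξ = C ∩ Set.Iio η := by
      apply Set.Subset.antisymm
      · exact fun c hc => ⟨hc.1, hc.2.trans hξη⟩
      · exact fun c hc => ⟨hc.1, lt_of_le_of_lt (hle_γ η c hc.1 hc.2) h'⟩
    rw [hγf]; simp only []; rw [hset]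
  -- ladder passes γf at some level
  have hnf : ∃ nf : Ordinal → ℕ, ∀ ξ ∈ S, γf ξ < x ξ (nf ξ) := by
    refine ⟨fun ξ => if h : ∃ n, γf ξ < x ξ n then Nat.find h else 0, ?_⟩
    intro ξ hξ
    obtain ⟨hξω, hξlim⟩ := hSsub ξ hξ
    have hex : ∃ n, γf ξ < x ξ n := (hx ξ hξω hξlim).2.2 (γf ξ) (hγlt ξ hξ)
    simp only [dif_pos hex]
    exact Nat.find_spec hex
  obtain ⟨nf, hnf⟩ := hnf
  -- each fiber of γf within S is countable
  have hcount : ∀ γ : Ordinal, {ξ | ξ ∈ S ∧ γf ξ = γ}.Countable := by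
    intro γ
    rcases Set.eq_empty_or_nonempty {ξ | ξ ∈ S ∧ γf ξ = γ} with hemp | ⟨ξ0, hξ0⟩
    · rw [hemp]; exact Set.countable_empty
    · have hγω : γ < ω1 := hξ0.2 ▸ ((hγlt ξ0 hξ0.1).trans (hSsub ξ0 hξ0.1).1)
      obtain ⟨c, hcC, hγc⟩ := hC.2.1 γ hγω
      have hsub : {ξ | ξ ∈ S ∧ γf ξ = γ} ⊆ Set.Iio c := by
        intro ξ ⟨hξS, hξγ⟩
        rcases lt_trichotomy ξ c with h | h | h
        · exact h
        · exact absurd (h ▸ hcC) (hnotC ξ hξS)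
        · exact absurd (hξγ ▸ hle_γ ξ c hcC h) (not_le.mpr hγc)
      refine Set.Countable.mono hsub ?_
      rw [Cardinal.countable_iff_lt_aleph_one, Ordinal.mk_Iio_ordinal,
        Cardinal.lift_lt_aleph_one]
      have hcω : c < (Cardinal.aleph 1).ord := hC.1 hcC
      exact Cardinal.lt_ord.mp hcω
  have hech : ∀ γ : Ordinal, ∃ f : Ordinal → ℕ, Set.InjOn f {ξ | ξ ∈ S ∧ γf ξ = γ} :=
    fun γ => Set.countable_iff_exists_injOn.mp (hcount γ)
  choose e he using hech
  -- the decomposition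
  set A : ℕ → Set Ordinal := fun j =>
    {ξ | ξ ∈ S ∧ nf ξ = (Nat.unpair j).1 ∧ e (γf ξ) ξ = (Nat.unpair j).2} with hA
  refine ⟨A, ?_, ?_⟩
  · apply Set.Subset.antisymm
    · exact Set.iUnion_subset fun j ξ hξ => hξ.1
    · intro ξ hξ
      refine Set.mem_iUnion.mpr ⟨Nat.pair (nf ξ) (e (γf ξ) ξ), hξ, ?_, ?_⟩ <;>
        simp [Nat.unpair_pair]
  · intro j
    rintro ⟨f, hfA, hfm⟩
    set n := (Nat.unpair j).1 with hn
    -- distinct members of A j have ladders differing by level n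
    have hinj : ∀ ξ η, ξ ∈ A j → η ∈ A j → ξ ≠ η → ∃ k ≤ n, x ξ k ≠ x η k := by
      have haux : ∀ ξ η, ξ ∈ A j → η ∈ A j → ξ < η → γf ξ ≠ γf η → x ξ n ≠ x η n := by
        rintro ξ η ⟨hξS, hξn, _⟩ ⟨hηS, hηn, _⟩ hlt hneγ
        have h1 : ξ ≤ γf η := hdich ξ hξS η hηS hlt hneγ
        obtain ⟨hξω, hξlim⟩ := hSsub ξ hξS
        have h2 : x ξ n < ξ := (hx ξ hξω hξlim).2.1 n
        have h3 : γf η < x η n := by rw [hn, ← hηn]; exact hnf η hηS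
        exact ne_of_lt (lt_of_lt_of_le h2 (h1.trans h3.le))
      intro ξ η hξ hη hne
      by_cases hγ : γf ξ = γf η
      · exfalso
        apply hne
        have hmem1 : ξ ∈ {ζ | ζ ∈ S ∧ γf ζ = γf ξ} := ⟨hξ.1, rfl⟩
        have hmem2 : η ∈ {ζ | ζ ∈ S ∧ γf ζ = γf ξ} := ⟨hη.1, hγ.symm⟩
        apply he (γf ξ) hmem1 hmem2
        have := hξ.2.2
        have h2 := hη.2.2
        rw [hγ]
        rw [hγ] at this
        exact this.trans h2.symm
      · rcases lt_or_gt_of_ne hne with h | h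
        · exact ⟨n, le_refl n, haux ξ η hξ hη h hγ⟩
        · exact ⟨n, le_refl n, (haux η ξ hη hξ h (Ne.symm hγ)).symm⟩
    -- apply the key lemma
    refine key n (fun q => x (f q)) r 0 1 one_pos ?_
    intro p q hp hpq hq
    obtain ⟨m, agree, hne, htw⟩ := hfm p q hpq
    have hfpq : f p ≠ f q := fun h => hne (by rw [h])
    obtain ⟨k, hk, hkne⟩ := hinj (f p) (f q) (hfA p) (hfA q) hfpq
    have hmn : m ≤ n := by
      by_contra h
      exact hkne (agree k (by omega))
    exact ⟨m, hmn, agree, hne, htw⟩
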